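/- For any even positive integer m and any integer n ≥ m + 1, the subgroup of Z^n generated by all {1, −1, 0}-vectors of weight m equals the set of all integer vectors in Z^n whose coordinate sum is even. -/

import Mathlib

/-- The set of `{1,−1,0}`-vectors in `ℤⁿ` of weight `m` (i.e. with exactly `m`
nonzero entries). -/
def weightVectors (n m : ℕ) : Set (Fin n → ℤ) :=
  {x | (∀ i, x i = 1 ∨ x i = -1 ∨ x i = 0) ∧
    (Finset.univ.filter fun i => x i ≠ 0).card = m}

lemma mem_weightVectors {n m : ℕ} (T : Finset (Fin n)) (hT : T.card = m)
    (ε : Fin n → ℤ) (hε : ∀ k, ε k = 1 ∨ ε k = -1) :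
    (fun k => if k ∈ T then ε k else 0) ∈ weightVectors n m := by
  constructor
  · intro k
    by_cases h : k ∈ T
    · rcases hε k with h1 | h1 <;> simp [h, h1]
    · simp [h]
  · rw [← hT]
    congr 1
    ext k
    rcases hε k with h1 | h1 <;> by_cases h : k ∈ T <;> simp [h, h1]

theorem stmt15 (n m : ℕ) (hm : Even m) (hm0 : 0 < m) (hn : m + 1 ≤ n) :
    (AddSubgroup.closure (weightVectors n m) : Set (Fin n → ℤ)) =
      {x | Even (∑ i, x i)} := by
  set G := AddSubgroup.closure (weightVectors n m)
  -- choose a set S of size m - 1 avoiding any two given indices will be done later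
  have hdiff : ∀ i j : Fin n, i ≠ j →
      (Pi.single i 1 - Pi.single j 1 : Fin n → ℤ) ∈ G := by
    intro i j hij
    have hle : m - 1 ≤ ((Finset.univ : Finset (Fin n)) \ {i, j}).card := by
      rw [Finset.card_sdiff_of_subset (Finset.subset_univ _), Finset.card_univ, Fintype.card_fin,
        Finset.card_pair hij]
      omega
    obtain ⟨S, hSsub, hScard⟩ := Finset.exists_subset_card_eq hle
    have hiS : i ∉ S := fun h => by simpa using hSsub h
    have hjS : j ∉ S := fun h => by simpa using hSsub h
    have hv := mem_weightVectors (m := m) (insert i S) (by rw [Finset.card_insert_of_notMem hiS]; omega)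
      (fun _ => 1) (fun _ => Or.inl rfl)
    have hw := mem_weightVectors (m := m) (insert j S) (by rw [Finset.card_insert_of_notMem hjS]; omega)
      (fun _ => 1) (fun _ => Or.inl rfl)
    have key : (Pi.single i 1 - Pi.single j 1 : Fin n → ℤ) =
        (fun k => if k ∈ insert i S then (1:ℤ) else 0) -
        (fun k => if k ∈ insert j S then (1:ℤ) else 0) := by
      funext k
      simp only [Pi.sub_apply, Pi.single_apply, Finset.mem_insert]
      by_cases hki : k = i <;> by_cases hkj : k = j <;> by_cases hkS : k ∈ S <;>
        simp_all
    rw [key]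
    exact sub_mem (AddSubgroup.subset_closure hv) (AddSubgroup.subset_closure hw)
  have i0 : Fin n := ⟨0, by omega⟩
  have hdouble : ∀ i : Fin n, (Pi.single i 2 : Fin n → ℤ) ∈ G := by
    intro i
    have hle : m - 1 ≤ ((Finset.univ : Finset (Fin n)) \ {i}).card := by
      rw [Finset.card_sdiff_of_subset (Finset.subset_univ _), Finset.card_univ, Fintype.card_fin,
        Finset.card_singleton]
      omega
    obtain ⟨S, hSsub, hScard⟩ := Finset.exists_subset_card_eq hle
    have hiS : i ∉ S := fun h => by simpa using hSsub h
    have hv := mem_weightVectors (m := m) (insert i S) (by rw [Finset.card_insert_of_notMem hiS]; omega)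
      (fun _ => 1) (fun _ => Or.inl rfl)
    have hw := mem_weightVectors (m := m) (insert i S) (by rw [Finset.card_insert_of_notMem hiS]; omega)
      (fun k => if k = i then 1 else -1)
      (fun k => by by_cases h : k = i <;> simp [h])
    have key : (Pi.single i 2 : Fin n → ℤ) =
        (fun k => if k ∈ insert i S then (1:ℤ) else 0) +
        (fun k => if k ∈ insert i S then (if k = i then (1:ℤ) else -1) else 0) := by
      funext k
      simp only [Pi.add_apply, Pi.single_apply, Finset.mem_insert]
      by_cases hki : k = i <;> by_cases hkS : k ∈ S <;> simp_all
    rw [key]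
    exact add_mem (AddSubgroup.subset_closure hv) (AddSubgroup.subset_closure hw)
  ext x
  constructor
  · -- forward: closure ≤ even sum
    intro hx
    have : ∀ y ∈ G, Even (∑ i, y i) := by
      intro y hy
      induction hy using AddSubgroup.closure_induction with
      | mem z hz =>
        rw [even_iff_two_dvd, show (2:ℤ) = ((2:ℕ):ℤ) from rfl, ← ZMod.intCast_zmod_eq_zero_iff_dvd]
        push_cast
        have : ∀ i : Fin n, ((z i : ZMod 2)) = if z i ≠ 0 then 1 else 0 := by
          intro i
          rcases hz.1 i with h | h | h <;> simp [h] <;> decide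
        rw [Finset.sum_congr rfl fun i _ => this i, Finset.sum_boole, hz.2]
        obtain ⟨k, hk⟩ := hm
        subst hk
        push_cast
        ring_nf
        simp only [mul_eq_zero]
        exact Or.inr (by decide)
      | zero => simp
      | add a b _ _ ha hb =>
        simpa [Finset.sum_add_distrib] using ha.add hb
      | neg a _ ha =>
        simpa [Finset.sum_neg_distrib] using ha.neg
    exact this x hx
  · intro hx
    obtain ⟨c, hc⟩ := hx
    have key : x = (∑ i, x i • (Pi.single i 1 - Pi.single i0 1 : Fin n → ℤ)) +
        c • (Pi.single i0 2 : Fin n → ℤ) := by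
      funext k
      simp only [Pi.add_apply, Finset.sum_apply, Pi.smul_apply, Pi.sub_apply,
        Pi.single_apply, smul_eq_mul, mul_sub]
      rw [Finset.sum_sub_distrib]
      by_cases hk : k = i0 <;>
        simp [hk, Finset.sum_ite_eq, Finset.mul_sum] <;> omega
    show x ∈ G
    rw [key]
    refine add_mem (AddSubgroup.sum_mem _ fun i _ => ?_) (AddSubgroup.zsmul_mem _ (hdouble i0) _)
    by_cases hi : i = i0
    · subst hi; simpa using zero_mem G
    · exact AddSubgroup.zsmul_mem _ (hdiff i i0 hi) _
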